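/- Let k ≥ 4 and S = ⟨2k+1, 2k+2, ..., 3k+1⟩. Then |λ(S)| = k² + 4k, where |λ(S)| = #{(u,x) : u ∈ S, x ∉ S, x ≥ 0, u < x}. -/

import Mathlib

/-- The size of the partition associated to a numerical set `T`. -/
noncomputable def lamSize (T : Set ℕ) : ℕ :=
  {p : ℕ × ℕ | p.1 ∈ T ∧ p.2 ∉ T ∧ p.1 < p.2}.ncard

lemma chain_mem (k : ℕ) : ∀ m, 1 ≤ m → ∀ n, m*(2*k+1) ≤ n → n ≤ m*(3*k+1) →
    n ∈ AddSubmonoid.closure (Set.Icc (2 * k + 1) (3 * k + 1)) := by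
  intro m
  induction m with
  | zero => omega
  | succ m ih =>
    intro _ n h1 h2
    rcases Nat.eq_zero_or_pos m with hm | hm
    · subst hm
      exact AddSubmonoid.subset_closure (Set.mem_Icc.mpr (by omega))
    · have hAB : m*(2*k+1) ≤ m*(3*k+1) := Nat.mul_le_mul_left m (by omega)
      have h1' : m*(2*k+1) + (2*k+1) ≤ n := by rw [Nat.succ_mul] at h1; omega
      have h2' : n ≤ m*(3*k+1) + (3*k+1) := by rw [Nat.succ_mul] at h2; omega
      set g := max (2*k+1) (n - m*(3*k+1)) with hg
      have hg1 : 2*k+1 ≤ g := le_max_left _ _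
      have hg2 : g ≤ 3*k+1 := max_le (by omega) (by omega)
      have hrest : m*(2*k+1) ≤ n - g ∧ n - g ≤ m*(3*k+1) := by
        rcases max_cases (2*k+1) (n - m*(3*k+1)) with ⟨h, h'⟩ | ⟨h, h'⟩ <;> omega
      have hsum : n = g + (n - g) := by omega
      rw [hsum]
      exact AddSubmonoid.add_mem _ (AddSubmonoid.subset_closure (Set.mem_Icc.mpr ⟨hg1, hg2⟩))
        (ih (by omega) _ hrest.1 hrest.2)

lemma mem_S_iff (k : ℕ) (hk : 4 ≤ k) (n : ℕ) :
    n ∈ AddSubmonoid.closure (Set.Icc (2 * k + 1) (3 * k + 1)) ↔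
      n = 0 ∨ (2*k+1 ≤ n ∧ n ≤ 3*k+1) ∨ 4*k+2 ≤ n := by
  constructor
  · intro h
    induction h using AddSubmonoid.closure_induction with
    | mem x hx => rcases Set.mem_Icc.mp hx with ⟨h1, h2⟩; omega
    | zero => left; rfl
    | add x y hx hy ihx ihy => omega
  · rintro (rfl | ⟨h1, h2⟩ | h)
    · exact AddSubmonoid.zero_mem _
    · exact AddSubmonoid.subset_closure (Set.mem_Icc.mpr ⟨h1, h2⟩)
    · set m := n / (2*k+1) with hm
      have hmod : n % (2*k+1) < 2*k+1 := Nat.mod_lt n (by omega)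
      have hdiv : (2*k+1) * m + n % (2*k+1) = n := by
        rw [hm]; exact Nat.div_add_mod n (2*k+1)
      have hm2 : 2 ≤ m := by
        rw [hm]
        exact (Nat.le_div_iff_mul_le (by omega)).mpr (by omega)
      have hmk : 2*k ≤ m*k := Nat.mul_le_mul_right k hm2
      have hexp : m*(3*k+1) = (2*k+1)*m + m*k := by ring
      have hcomm : m*(2*k+1) = (2*k+1)*m := by ring
      exact chain_mem k m (by omega) n (by omega) (by omega)

theorem stmt_12 (k : ℕ) (hk : 4 ≤ k)
    (S : Set ℕ)
    (hS : S = {n : ℕ | n ∈ AddSubmonoid.closure (Set.Icc (2 * k + 1) (3 * k + 1))}) :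
    lamSize S = k ^ 2 + 4 * k := by
  have hmem : ∀ n, n ∈ S ↔ n = 0 ∨ (2*k+1 ≤ n ∧ n ≤ 3*k+1) ∨ 4*k+2 ≤ n := by
    intro n; rw [hS]; exact mem_S_iff k hk n
  set G : Finset ℕ := Finset.Icc 1 (2*k) ∪ Finset.Icc (3*k+2) (4*k+1) with hG
  set F : Finset (ℕ × ℕ) := ({(0:ℕ)} ×ˢ G) ∪
      (Finset.Icc (2*k+1) (3*k+1) ×ˢ Finset.Icc (3*k+2) (4*k+1)) with hF
  have hset : {p : ℕ × ℕ | p.1 ∈ S ∧ p.2 ∉ S ∧ p.1 < p.2} = ↑F := by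
    ext ⟨u, x⟩
    simp only [Set.mem_setOf_eq, hmem, Finset.coe_union, Set.mem_union, hF,
      Finset.coe_product, Set.mem_prod, Finset.coe_singleton, Set.mem_singleton_iff,
      Finset.coe_Icc, Set.mem_Icc, hG]
    omega
  rw [lamSize, hset, Set.ncard_coe_finset]
  have hdisj : Disjoint ({(0:ℕ)} ×ˢ G)
      (Finset.Icc (2*k+1) (3*k+1) ×ˢ Finset.Icc (3*k+2) (4*k+1)) := by
    rw [Finset.disjoint_left]
    rintro ⟨u, x⟩ h1 h2
    simp only [Finset.mem_product, Finset.mem_singleton, Finset.mem_Icc] at h1 h2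
    omega
  have hdisjG : Disjoint (Finset.Icc 1 (2*k)) (Finset.Icc (3*k+2) (4*k+1)) := by
    rw [Finset.disjoint_left]
    intro a h1 h2
    simp only [Finset.mem_Icc] at h1 h2
    omega
  have c1 : G.card = 3*k := by
    rw [hG, Finset.card_union_of_disjoint hdisjG, Nat.card_Icc, Nat.card_Icc]; omega
  have c2 : (Finset.Icc (2*k+1) (3*k+1)).card = k+1 := by rw [Nat.card_Icc]; omega
  have c3 : (Finset.Icc (3*k+2) (4*k+1)).card = k := by rw [Nat.card_Icc]; omega
  rw [hF, Finset.card_union_of_disjoint hdisj, Finset.card_product, Finset.card_product,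
    c1, c2, c3, Finset.card_singleton]
  ring
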